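/- arXiv:0905.1370 — 4 statements merged into one kernel-verified Lean document; each statement's English description precedes it below -/
import Mathlib

section
/- Let (V₀, ω₀) and (V₁, ω₁) be symplectic vector spaces and let Λ ⊆ V₀ × V₁ be a Lagrangian subspace with respect to the form (−ω₀) ⊕ ω₁. Then {v₁ ∈ V₁ : (0, v₁) ∈ Λ} equals the ω₁-symplectic complement of the projection of Λ to the second factor V₁, and {v₀ ∈ V₀ : (v₀, 0) ∈ Λ} equals the ω₀-symplectic complement of the projection of Λ to the first factor V₀. -/
open LinearMap Submodule

/-- The symplectic complement of a subspace `W` with respect to a bilinear form `ω`. -/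
def symplComp {V : Type*} [AddCommGroup V] [Module ℝ V]
    (ω : V →ₗ[ℝ] V →ₗ[ℝ] ℝ) (W : Submodule ℝ V) : Submodule ℝ V where
  carrier := {v | ∀ w ∈ W, ω v w = 0}
  zero_mem' := by intro w _; simp
  add_mem' := by intro a b ha hb w hw; simp [ha w hw, hb w hw]
  smul_mem' := by intro c a ha w hw; simp [ha w hw]

/-- `ω` is a (linear) symplectic form: alternating and nondegenerate. -/
structure IsSymplecticForm {V : Type*} [AddCommGroup V] [Module ℝ V]
    (ω : V →ₗ[ℝ] V →ₗ[ℝ] ℝ) : Prop where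
  alternating : ∀ v, ω v v = 0
  nondeg : ∀ v, (∀ w, ω v w = 0) → v = 0

/-- A subspace is Lagrangian iff it equals its symplectic complement. -/
def IsLagrangian {V : Type*} [AddCommGroup V] [Module ℝ V]
    (ω : V →ₗ[ℝ] V →ₗ[ℝ] ℝ) (Λ : Submodule ℝ V) : Prop :=
  Λ = symplComp ω Λ

/-- The symplectic form `(−ω₀) ⊕ ω₁` on `V₀ × V₁`. -/
def prodFormNegPos {V₀ V₁ : Type*} [AddCommGroup V₀] [Module ℝ V₀]
    [AddCommGroup V₁] [Module ℝ V₁]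
    (ω₀ : V₀ →ₗ[ℝ] V₀ →ₗ[ℝ] ℝ) (ω₁ : V₁ →ₗ[ℝ] V₁ →ₗ[ℝ] ℝ) :
    (V₀ × V₁) →ₗ[ℝ] (V₀ × V₁) →ₗ[ℝ] ℝ :=
  LinearMap.mk₂ ℝ (fun x y => - ω₀ x.1 y.1 + ω₁ x.2 y.2)
    (by intro x x' y
        simp only [Prod.fst_add, Prod.snd_add, map_add, LinearMap.add_apply]; ring)
    (by intro c x y
        simp only [Prod.smul_fst, Prod.smul_snd, map_smul, LinearMap.smul_apply,
          smul_eq_mul]; ring)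
    (by intro x y y'
        simp only [Prod.fst_add, Prod.snd_add, map_add, LinearMap.add_apply]; ring)
    (by intro c x y
        simp only [Prod.smul_fst, Prod.smul_snd, map_smul, LinearMap.smul_apply,
          smul_eq_mul]; ring)

/-- The symplectic form `ω₀₁₁₂ = (−ω₀) ⊕ ω₁ ⊕ (−ω₁) ⊕ ω₂` on `(V₀ × V₁) × (V₁ × V₂)`. -/
def form0112 {V₀ V₁ V₂ : Type*} [AddCommGroup V₀] [Module ℝ V₀]
    [AddCommGroup V₁] [Module ℝ V₁] [AddCommGroup V₂] [Module ℝ V₂]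
    (ω₀ : V₀ →ₗ[ℝ] V₀ →ₗ[ℝ] ℝ) (ω₁ : V₁ →ₗ[ℝ] V₁ →ₗ[ℝ] ℝ)
    (ω₂ : V₂ →ₗ[ℝ] V₂ →ₗ[ℝ] ℝ) :
    ((V₀ × V₁) × (V₁ × V₂)) →ₗ[ℝ] ((V₀ × V₁) × (V₁ × V₂)) →ₗ[ℝ] ℝ :=
  LinearMap.mk₂ ℝ
    (fun x y => - ω₀ x.1.1 y.1.1 + ω₁ x.1.2 y.1.2 - ω₁ x.2.1 y.2.1 + ω₂ x.2.2 y.2.2)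
    (by intro x x' y
        simp only [Prod.fst_add, Prod.snd_add, map_add, LinearMap.add_apply]; ring)
    (by intro c x y
        simp only [Prod.smul_fst, Prod.smul_snd, map_smul, LinearMap.smul_apply,
          smul_eq_mul]; ring)
    (by intro x y y'
        simp only [Prod.fst_add, Prod.snd_add, map_add, LinearMap.add_apply]; ring)
    (by intro c x y
        simp only [Prod.smul_fst, Prod.smul_snd, map_smul, LinearMap.smul_apply,
          smul_eq_mul]; ring)

/-- `K = V₀ × Δ₁ × V₂`, the product of the full spaces with the diagonal of `V₁`. -/
def Kdiag {V₀ V₁ V₂ : Type*} [AddCommGroup V₀] [Module ℝ V₀]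
    [AddCommGroup V₁] [Module ℝ V₁] [AddCommGroup V₂] [Module ℝ V₂] :
    Submodule ℝ ((V₀ × V₁) × (V₁ × V₂)) where
  carrier := {x | x.1.2 = x.2.1}
  zero_mem' := rfl
  add_mem' := by
    intro a b ha hb
    simp only [Set.mem_setOf_eq] at ha hb ⊢
    show a.1.2 + b.1.2 = a.2.1 + b.2.1
    rw [ha, hb]
  smul_mem' := by
    intro c a ha
    simp only [Set.mem_setOf_eq] at ha ⊢
    show c • a.1.2 = c • a.2.1
    rw [ha]

/-- The projection `π₀₂ : V₀ × V₁ × V₁ × V₂ → V₀ × V₂` onto the outer factors. -/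
def proj02 {V₀ V₁ V₂ : Type*} [AddCommGroup V₀] [Module ℝ V₀]
    [AddCommGroup V₁] [Module ℝ V₁] [AddCommGroup V₂] [Module ℝ V₂] :
    ((V₀ × V₁) × (V₁ × V₂)) →ₗ[ℝ] V₀ × V₂ where
  toFun x := (x.1.1, x.2.2)
  map_add' _ _ := rfl
  map_smul' _ _ := rfl


theorem statement0 {V₀ V₁ : Type*}
    [AddCommGroup V₀] [Module ℝ V₀] [FiniteDimensional ℝ V₀]
    [AddCommGroup V₁] [Module ℝ V₁] [FiniteDimensional ℝ V₁]
    (ω₀ : V₀ →ₗ[ℝ] V₀ →ₗ[ℝ] ℝ) (ω₁ : V₁ →ₗ[ℝ] V₁ →ₗ[ℝ] ℝ)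
    (hω₀ : IsSymplecticForm ω₀) (hω₁ : IsSymplecticForm ω₁)
    (Λ : Submodule ℝ (V₀ × V₁))
    (hΛ : IsLagrangian (prodFormNegPos ω₀ ω₁) Λ) :
    Submodule.comap (LinearMap.inr ℝ V₀ V₁) Λ
      = symplComp ω₁ (Submodule.map (LinearMap.snd ℝ V₀ V₁) Λ) ∧
    Submodule.comap (LinearMap.inl ℝ V₀ V₁) Λ
      = symplComp ω₀ (Submodule.map (LinearMap.fst ℝ V₀ V₁) Λ) := by
  constructor
  · ext v₁
    constructor
    · intro hv w hw
      obtain ⟨⟨x₀, x₁⟩, hx, rfl⟩ := hw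
      have := hΛ ▸ hv
      have h := this (x₀, x₁) hx
      simpa [prodFormNegPos, LinearMap.mk₂] using h
    · intro hv
      rw [hΛ]
      intro w hw
      have h := hv w.2 ⟨w, hw, rfl⟩
      simp [prodFormNegPos, LinearMap.mk₂, h]
  · ext v₀
    constructor
    · intro hv w hw
      obtain ⟨⟨x₀, x₁⟩, hx, rfl⟩ := hw
      have := hΛ ▸ hv
      have h := this (x₀, x₁) hx
      simpa [prodFormNegPos, LinearMap.mk₂, neg_eq_zero] using h
    · intro hv
      rw [hΛ]
      intro w hw
      have h := hv w.1 ⟨w, hw, rfl⟩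
      simp [prodFormNegPos, LinearMap.mk₂, h]
end

section
/- Let (V₀, ω₀), (V₁, ω₁), (V₂, ω₂) be symplectic vector spaces, Λ₀₁ ⊆ V₀ × V₁ a Lagrangian subspace for (−ω₀) ⊕ ω₁, and Λ₁₂ ⊆ V₁ × V₂ a Lagrangian subspace for (−ω₁) ⊕ ω₂. Then the kernel of the projection π₀₂ restricted to the fiber product Λ₀₁ ×_{V₁} Λ₁₂ equals {(0, v₁, v₁, 0) : v₁ ∈ P₀₁^{ω₁} ∩ P₁₂^{ω₁}}, where P₀₁ ⊆ V₁ is the projection of Λ₀₁ to its second factor, P₁₂ ⊆ V₁ is the projection of Λ₁₂ to its first factor, and (·)^{ω₁} denotes the ω₁-symplectic complement in V₁. -/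
open LinearMap Submodule

lemma mem_symplComp {V : Type*} [AddCommGroup V] [Module ℝ V]
    (ω : V →ₗ[ℝ] V →ₗ[ℝ] ℝ) (W : Submodule ℝ V) (v : V) :
    v ∈ symplComp ω W ↔ ∀ w ∈ W, ω v w = 0 := Iff.rfl


theorem statement2 {V₀ V₁ V₂ : Type*}
    [AddCommGroup V₀] [Module ℝ V₀] [FiniteDimensional ℝ V₀]
    [AddCommGroup V₁] [Module ℝ V₁] [FiniteDimensional ℝ V₁]
    [AddCommGroup V₂] [Module ℝ V₂] [FiniteDimensional ℝ V₂]
    (ω₀ : V₀ →ₗ[ℝ] V₀ →ₗ[ℝ] ℝ) (ω₁ : V₁ →ₗ[ℝ] V₁ →ₗ[ℝ] ℝ) (ω₂ : V₂ →ₗ[ℝ] V₂ →ₗ[ℝ] ℝ)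
    (hω₀ : IsSymplecticForm ω₀) (hω₁ : IsSymplecticForm ω₁) (hω₂ : IsSymplecticForm ω₂)
    (Λ₀₁ : Submodule ℝ (V₀ × V₁)) (Λ₁₂ : Submodule ℝ (V₁ × V₂))
    (hΛ₀₁ : IsLagrangian (prodFormNegPos ω₀ ω₁) Λ₀₁)
    (hΛ₁₂ : IsLagrangian (prodFormNegPos ω₁ ω₂) Λ₁₂) :
    (Λ₀₁.prod Λ₁₂ ⊓ Kdiag) ⊓ LinearMap.ker proj02
      = Submodule.map ((LinearMap.inr ℝ V₀ V₁).prod (LinearMap.inl ℝ V₁ V₂))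
          (symplComp ω₁ (Submodule.map (LinearMap.snd ℝ V₀ V₁) Λ₀₁)
            ⊓ symplComp ω₁ (Submodule.map (LinearMap.fst ℝ V₁ V₂) Λ₁₂)) := by
  ext x
  obtain ⟨⟨x0, x1⟩, y1, x2⟩ := x
  simp only [Submodule.mem_inf, Submodule.mem_prod, LinearMap.mem_ker, Submodule.mem_map,
    LinearMap.prod_apply, Function.prod, LinearMap.inr_apply, LinearMap.inl_apply, mem_symplComp,
    LinearMap.snd_apply, LinearMap.fst_apply, proj02, LinearMap.coe_mk, AddHom.coe_mk,
    Prod.mk_eq_zero, Prod.mk.injEq]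
  constructor
  · rintro ⟨⟨⟨h01, h12⟩, hd⟩, hx0, hx2⟩
    have hd' : x1 = y1 := hd
    subst hx0 hx2 hd'
    refine ⟨x1, ⟨?_, ?_⟩, ⟨rfl, rfl⟩, rfl, rfl⟩
    · rintro w ⟨⟨a, b⟩, hab, rfl⟩
      have := (hΛ₀₁ ▸ h01 : (0, x1) ∈ symplComp (prodFormNegPos ω₀ ω₁) Λ₀₁) (a, b) hab
      simp only [prodFormNegPos, LinearMap.mk₂_apply, map_zero, LinearMap.zero_apply,
        neg_zero, zero_add] at this
      exact this
    · rintro w ⟨⟨b, c⟩, hbc, rfl⟩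
      have := (hΛ₁₂ ▸ h12 : (x1, 0) ∈ symplComp (prodFormNegPos ω₁ ω₂) Λ₁₂) (b, c) hbc
      simp only [prodFormNegPos, LinearMap.mk₂_apply, map_zero, LinearMap.zero_apply,
        add_zero, neg_eq_zero] at this
      exact this
  · rintro ⟨v, ⟨hv1, hv2⟩, ⟨rfl, rfl⟩, rfl, rfl⟩
    refine ⟨⟨⟨?_, ?_⟩, rfl⟩, rfl, rfl⟩
    · rw [hΛ₀₁]
      rintro ⟨a, b⟩ hab
      simp only [prodFormNegPos, LinearMap.mk₂_apply, map_zero, LinearMap.zero_apply,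
        neg_zero, zero_add]
      exact hv1 b ⟨(a, b), hab, rfl⟩
    · rw [hΛ₁₂]
      rintro ⟨b, c⟩ hbc
      simp only [prodFormNegPos, LinearMap.mk₂_apply, map_zero, LinearMap.zero_apply,
        add_zero, neg_eq_zero]
      exact hv2 b ⟨(b, c), hbc, rfl⟩
end

section
/- Let (V₀, ω₀), (V₁, ω₁), (V₂, ω₂) be symplectic vector spaces, Λ₀₁ ⊆ V₀ × V₁ a Lagrangian subspace for (−ω₀) ⊕ ω₁, and Λ₁₂ ⊆ V₁ × V₂ a Lagrangian subspace for (−ω₁) ⊕ ω₂. Then, without any transversality assumption, the geometric composition Λ₀₁ ∘ Λ₁₂ := {(v₀, v₂) ∈ V₀ × V₂ : there exists v₁ ∈ V₁ with (v₀,v₁) ∈ Λ₀₁ and (v₁,v₂) ∈ Λ₁₂} is a Lagrangian subspace of (V₀ × V₂, (−ω₀) ⊕ ω₂). -/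
open LinearMap Submodule

section Aux

open Module

variable {V : Type*} [AddCommGroup V] [Module ℝ V]

lemma mem_symplComp_iff {ω : V →ₗ[ℝ] V →ₗ[ℝ] ℝ} {W : Submodule ℝ V} {v : V} :
    v ∈ symplComp ω W ↔ ∀ w ∈ W, ω v w = 0 := Iff.rfl

lemma IsSymplecticForm.skew {ω : V →ₗ[ℝ] V →ₗ[ℝ] ℝ} (h : IsSymplecticForm ω)
    (v w : V) : ω v w = - ω w v := by
  have h2 := h.alternating (v + w)
  simp only [map_add, LinearMap.add_apply, h.alternating] at h2
  linarith

lemma symplComp_antitone {ω : V →ₗ[ℝ] V →ₗ[ℝ] ℝ} {A B : Submodule ℝ V}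
    (hAB : A ≤ B) : symplComp ω B ≤ symplComp ω A :=
  fun _ hv w hw => hv w (hAB hw)

lemma finrank_symplComp [FiniteDimensional ℝ V] {ω : V →ₗ[ℝ] V →ₗ[ℝ] ℝ}
    (h : IsSymplecticForm ω) (W : Submodule ℝ V) :
    finrank ℝ (symplComp ω W) + finrank ℝ W = finrank ℝ V := by
  have hker : symplComp ω W = LinearMap.ker (W.dualRestrict ∘ₗ ω) := by
    ext v
    simp only [mem_symplComp_iff, LinearMap.mem_ker, LinearMap.comp_apply]
    constructor
    · intro hv
      ext ⟨w, hw⟩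
      simpa using hv w hw
    · intro hv w hw
      have := congrFun (congrArg DFunLike.coe hv) ⟨w, hw⟩
      simpa using this
  have hinj : Function.Injective ω := by
    rw [← LinearMap.ker_eq_bot]
    ext v
    simp only [LinearMap.mem_ker, Submodule.mem_bot]
    constructor
    · intro hv
      exact h.nondeg v (fun w => by rw [hv]; rfl)
    · rintro rfl; simp
  have hsurjω : Function.Surjective ω := by
    have := Subspace.dual_finrank_eq (K := ℝ) (V := V)
    exact (LinearMap.injective_iff_surjective_of_finrank_eq_finrank this.symm).mp hinj
  have hsurj : Function.Surjective (W.dualRestrict ∘ₗ ω) :=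
    (Subspace.dualRestrict_surjective).comp hsurjω
  have hrn := LinearMap.finrank_range_add_finrank_ker (W.dualRestrict ∘ₗ ω)
  rw [LinearMap.range_eq_top.mpr hsurj, finrank_top, Subspace.dual_finrank_eq] at hrn
  rw [hker]
  have hWd : finrank ℝ (Dual ℝ W) = finrank ℝ W := Subspace.dual_finrank_eq
  omega

lemma symplComp_symplComp [FiniteDimensional ℝ V] {ω : V →ₗ[ℝ] V →ₗ[ℝ] ℝ}
    (h : IsSymplecticForm ω) (W : Submodule ℝ V) :
    symplComp ω (symplComp ω W) = W := by
  have hle : W ≤ symplComp ω (symplComp ω W) := by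
    intro v hv w hw
    rw [h.skew]
    rw [hw v hv, neg_zero]
  have h1 := finrank_symplComp h W
  have h2 := finrank_symplComp h (symplComp ω W)
  exact (Submodule.eq_of_le_of_finrank_le hle (by omega)).symm

lemma symplComp_sup {ω : V →ₗ[ℝ] V →ₗ[ℝ] ℝ} (A B : Submodule ℝ V) :
    symplComp ω (A ⊔ B) = symplComp ω A ⊓ symplComp ω B := by
  apply le_antisymm
  · exact le_inf (symplComp_antitone le_sup_left) (symplComp_antitone le_sup_right)
  · rintro v ⟨hvA, hvB⟩ w hw
    rcases Submodule.mem_sup.mp hw with ⟨a, ha, b, hb, rfl⟩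
    rw [map_add, hvA a ha, hvB b hb, add_zero]

lemma symplComp_inf [FiniteDimensional ℝ V] {ω : V →ₗ[ℝ] V →ₗ[ℝ] ℝ}
    (h : IsSymplecticForm ω) (A B : Submodule ℝ V) :
    symplComp ω (A ⊓ B) = symplComp ω A ⊔ symplComp ω B := by
  conv_lhs => rw [← symplComp_symplComp h A, ← symplComp_symplComp h B,
    ← symplComp_sup, symplComp_symplComp h]

end Aux


theorem statement6 {V₀ V₁ V₂ : Type*}
    [AddCommGroup V₀] [Module ℝ V₀] [FiniteDimensional ℝ V₀]
    [AddCommGroup V₁] [Module ℝ V₁] [FiniteDimensional ℝ V₁]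
    [AddCommGroup V₂] [Module ℝ V₂] [FiniteDimensional ℝ V₂]
    (ω₀ : V₀ →ₗ[ℝ] V₀ →ₗ[ℝ] ℝ) (ω₁ : V₁ →ₗ[ℝ] V₁ →ₗ[ℝ] ℝ) (ω₂ : V₂ →ₗ[ℝ] V₂ →ₗ[ℝ] ℝ)
    (hω₀ : IsSymplecticForm ω₀) (hω₁ : IsSymplecticForm ω₁) (hω₂ : IsSymplecticForm ω₂)
    (Λ₀₁ : Submodule ℝ (V₀ × V₁)) (Λ₁₂ : Submodule ℝ (V₁ × V₂))
    (hΛ₀₁ : IsLagrangian (prodFormNegPos ω₀ ω₁) Λ₀₁)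
    (hΛ₁₂ : IsLagrangian (prodFormNegPos ω₁ ω₂) Λ₁₂) :
    (↑(Submodule.map proj02 (Λ₀₁.prod Λ₁₂ ⊓ Kdiag)) : Set (V₀ × V₂))
        = {p : V₀ × V₂ | ∃ v₁ : V₁, (p.1, v₁) ∈ Λ₀₁ ∧ (v₁, p.2) ∈ Λ₁₂} ∧
    IsLagrangian (prodFormNegPos ω₀ ω₂)
      (Submodule.map proj02 (Λ₀₁.prod Λ₁₂ ⊓ Kdiag)) := by
  
  have hΩapp : ∀ x y : (V₀ × V₁) × (V₁ × V₂),
      form0112 ω₀ ω₁ ω₂ x y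
        = - ω₀ x.1.1 y.1.1 + ω₁ x.1.2 y.1.2 - ω₁ x.2.1 y.2.1 + ω₂ x.2.2 y.2.2 :=
    fun _ _ => rfl
  have hσapp : ∀ x y : V₀ × V₂,
      prodFormNegPos ω₀ ω₂ x y = - ω₀ x.1 y.1 + ω₂ x.2 y.2 := fun _ _ => rfl
  -- the big form is symplectic
  have hΩ : IsSymplecticForm (form0112 ω₀ ω₁ ω₂) := by
    constructor
    · intro v
      rw [hΩapp, hω₀.alternating, hω₁.alternating, hω₁.alternating, hω₂.alternating]
      ring
    · intro v hv
      have h0 : v.1.1 = 0 := by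
        apply hω₀.nondeg
        intro w
        have := hv ((w, 0), (0, 0))
        rw [hΩapp] at this
        simpa using this
      have h1 : v.1.2 = 0 := by
        apply hω₁.nondeg
        intro w
        have := hv ((0, w), (0, 0))
        rw [hΩapp] at this
        simpa using this
      have h21 : v.2.1 = 0 := by
        apply hω₁.nondeg
        intro w
        have := hv ((0, 0), (w, 0))
        rw [hΩapp] at this
        simpa using this
      have h2 : v.2.2 = 0 := by
        apply hω₂.nondeg
        intro w
        have := hv ((0, 0), (0, w))
        rw [hΩapp] at this
        simpa using this
      exact Prod.ext (Prod.ext h0 h1) (Prod.ext h21 h2)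
  -- the product of the two Lagrangians is Lagrangian for the big form
  have hΛ : Λ₀₁.prod Λ₁₂ = symplComp (form0112 ω₀ ω₁ ω₂) (Λ₀₁.prod Λ₁₂) := by
    ext x
    simp only [Submodule.mem_prod, mem_symplComp_iff]
    constructor
    · rintro ⟨hx1, hx2⟩ w hw
      rw [hΛ₀₁] at hx1
      rw [hΛ₁₂] at hx2
      have e1 : - ω₀ x.1.1 w.1.1 + ω₁ x.1.2 w.1.2 = 0 := hx1 w.1 hw.1
      have e2 : - ω₁ x.2.1 w.2.1 + ω₂ x.2.2 w.2.2 = 0 := hx2 w.2 hw.2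
      rw [hΩapp]
      linarith
    · intro hx
      constructor
      · rw [hΛ₀₁]
        intro w hw
        have := hx (w, 0) (Submodule.mem_prod.mpr ⟨hw, Submodule.zero_mem _⟩)
        rw [hΩapp] at this
        simp only [Prod.fst_zero, Prod.snd_zero, map_zero, LinearMap.zero_apply] at this
        show - ω₀ x.1.1 w.1 + ω₁ x.1.2 w.2 = 0
        linarith
      · rw [hΛ₁₂]
        intro w hw
        have := hx (0, w) (Submodule.mem_prod.mpr ⟨Submodule.zero_mem _, hw⟩)
        rw [hΩapp] at this
        simp only [Prod.fst_zero, Prod.snd_zero, map_zero, LinearMap.zero_apply] at this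
        show - ω₁ x.2.1 w.1 + ω₂ x.2.2 w.2 = 0
        linarith
  -- structure of the symplectic complement of the diagonal constraint
  have hKcomp : ∀ z ∈ symplComp (form0112 ω₀ ω₁ ω₂) Kdiag,
      z.1.1 = 0 ∧ z.2.2 = 0 ∧ z.1.2 = z.2.1 := by
    intro z hz
    refine ⟨?_, ?_, ?_⟩
    · apply hω₀.nondeg
      intro w
      have := hz ((w, 0), (0, 0)) rfl
      rw [hΩapp] at this
      simpa using this
    · apply hω₂.nondeg
      intro w
      have := hz ((0, 0), (0, w)) rfl
      rw [hΩapp] at this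
      simpa using this
    · have key : ∀ w, ω₁ (z.1.2 - z.2.1) w = 0 := by
        intro w
        have := hz ((0, w), (w, 0)) rfl
        rw [hΩapp] at this
        simp only [map_zero, LinearMap.zero_apply] at this
        rw [map_sub, LinearMap.sub_apply]
        linarith
      exact sub_eq_zero.mp (hω₁.nondeg _ key)
  -- isotropy of the composition
  have hCiso : ∀ x ∈ Λ₀₁.prod Λ₁₂ ⊓ Kdiag, ∀ y ∈ Λ₀₁.prod Λ₁₂ ⊓ Kdiag,
      prodFormNegPos ω₀ ω₂ (proj02 x) (proj02 y) = 0 := by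
    intro x hx y hy
    have hxΛ : x ∈ symplComp (form0112 ω₀ ω₁ ω₂) (Λ₀₁.prod Λ₁₂) := by
      rw [← hΛ]; exact (Submodule.mem_inf.mp hx).1
    have hΩxy : form0112 ω₀ ω₁ ω₂ x y = 0 := hxΛ y (Submodule.mem_inf.mp hy).1
    have hxK : x.1.2 = x.2.1 := (Submodule.mem_inf.mp hx).2
    have hyK : y.1.2 = y.2.1 := (Submodule.mem_inf.mp hy).2
    rw [hΩapp, hxK, hyK] at hΩxy
    rw [hσapp]
    show - ω₀ x.1.1 y.1.1 + ω₂ x.2.2 y.2.2 = 0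
    linarith
  constructor
  · -- set-theoretic description
    ext p
    simp only [SetLike.mem_coe, Submodule.mem_map, Set.mem_setOf_eq]
    constructor
    · rintro ⟨x, hx, rfl⟩
      have hx1 := (Submodule.mem_inf.mp hx).1
      have hxK : x.1.2 = x.2.1 := (Submodule.mem_inf.mp hx).2
      refine ⟨x.1.2, ?_, ?_⟩
      · have h : (((proj02 x).1, x.1.2) : V₀ × V₁) = x.1 := rfl
        rw [h]; exact (Submodule.mem_prod.mp hx1).1
      · have h : ((x.1.2, (proj02 x).2) : V₁ × V₂) = x.2 := by rw [hxK]; rfl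
        rw [h]; exact (Submodule.mem_prod.mp hx1).2
    · rintro ⟨v₁, h1, h2⟩
      exact ⟨((p.1, v₁), (v₁, p.2)),
        Submodule.mem_inf.mpr ⟨Submodule.mem_prod.mpr ⟨h1, h2⟩, rfl⟩, rfl⟩
  · -- Lagrangian property
    show Submodule.map proj02 (Λ₀₁.prod Λ₁₂ ⊓ Kdiag)
        = symplComp (prodFormNegPos ω₀ ω₂) (Submodule.map proj02 (Λ₀₁.prod Λ₁₂ ⊓ Kdiag))
    apply le_antisymm
    · intro w hw
      obtain ⟨x, hx, rfl⟩ := Submodule.mem_map.mp hw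
      intro u hu
      obtain ⟨y, hy, rfl⟩ := Submodule.mem_map.mp hu
      exact hCiso x hx y hy
    · intro c hc
      have hz₀comp : (((c.1, 0), (0, c.2)) : (V₀ × V₁) × (V₁ × V₂))
          ∈ symplComp (form0112 ω₀ ω₁ ω₂) (Λ₀₁.prod Λ₁₂ ⊓ Kdiag) := by
        intro x hx
        have hxC : proj02 x ∈ Submodule.map proj02 (Λ₀₁.prod Λ₁₂ ⊓ Kdiag) :=
          Submodule.mem_map_of_mem hx
        have hcx := hc (proj02 x) hxC
        rw [hσapp] at hcx
        have hcx' : - ω₀ c.1 x.1.1 + ω₂ c.2 x.2.2 = 0 := hcx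
        rw [hΩapp]
        show - ω₀ c.1 x.1.1 + ω₁ 0 x.1.2 - ω₁ 0 x.2.1 + ω₂ c.2 x.2.2 = 0
        simp only [map_zero, LinearMap.zero_apply]
        linarith
      rw [symplComp_inf hΩ, ← hΛ] at hz₀comp
      rcases Submodule.mem_sup.mp hz₀comp with ⟨l, hl, k, hk, hlk⟩
      have hk' := hKcomp k hk
      have hlK : l ∈ Kdiag := by
        show l.1.2 = l.2.1
        have h12 : l.1.2 + k.1.2 = (0 : V₁) := congrArg (fun t => t.1.2) hlk
        have h21 : l.2.1 + k.2.1 = (0 : V₁) := congrArg (fun t => t.2.1) hlk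
        have e1 : l.1.2 = - k.1.2 := eq_neg_of_add_eq_zero_left h12
        have e2 : l.2.1 = - k.2.1 := eq_neg_of_add_eq_zero_left h21
        rw [e1, e2, hk'.2.2]
      have hlmem : l ∈ Λ₀₁.prod Λ₁₂ ⊓ Kdiag := Submodule.mem_inf.mpr ⟨hl, hlK⟩
      have hproj : proj02 l = c := by
        have h11 : l.1.1 + k.1.1 = c.1 := congrArg (fun t => t.1.1) hlk
        have h22 : l.2.2 + k.2.2 = c.2 := congrArg (fun t => t.2.2) hlk
        rw [hk'.1, add_zero] at h11
        rw [hk'.2.1, add_zero] at h22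
        exact Prod.ext h11 h22
      exact hproj ▸ Submodule.mem_map_of_mem hlmem
end

section
/- Let (V₀, ω₀), (V₁, ω₁), (V₂, ω₂) be symplectic vector spaces and let Λ ⊆ V₀ × V₁ × V₁ × V₂ be a Lagrangian subspace for ω₀₁₁₂ satisfying Λ + K = V₀ × V₁ × V₁ × V₂, and set Λ₀₂ := π₀₂(Λ ∩ K) ⊆ V₀ × V₂. Then there exists a unique linear map ℓ : Λ₀₂ → V₁ such that Λ ∩ K = {(v₀, ℓ(v₀,v₂), ℓ(v₀,v₂), v₂) : (v₀, v₂) ∈ Λ₀₂}; in particular, for every (v₀,v₂) ∈ Λ₀₂ there is a unique v₁ ∈ V₁ with (v₀, v₁, v₁, v₂) ∈ Λ. -/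
open LinearMap Submodule

theorem statement8 {V₀ V₁ V₂ : Type*}
    [AddCommGroup V₀] [Module ℝ V₀] [FiniteDimensional ℝ V₀]
    [AddCommGroup V₁] [Module ℝ V₁] [FiniteDimensional ℝ V₁]
    [AddCommGroup V₂] [Module ℝ V₂] [FiniteDimensional ℝ V₂]
    (ω₀ : V₀ →ₗ[ℝ] V₀ →ₗ[ℝ] ℝ) (ω₁ : V₁ →ₗ[ℝ] V₁ →ₗ[ℝ] ℝ) (ω₂ : V₂ →ₗ[ℝ] V₂ →ₗ[ℝ] ℝ)
    (hω₀ : IsSymplecticForm ω₀) (hω₁ : IsSymplecticForm ω₁) (hω₂ : IsSymplecticForm ω₂)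
    (Λ : Submodule ℝ ((V₀ × V₁) × (V₁ × V₂)))
    (hΛ : IsLagrangian (form0112 ω₀ ω₁ ω₂) Λ)
    (htrans : Λ ⊔ Kdiag = ⊤) :
    (∃! ℓ : ↥(Submodule.map proj02 (Λ ⊓ Kdiag)) →ₗ[ℝ] V₁,
        (↑(Λ ⊓ Kdiag) : Set ((V₀ × V₁) × (V₁ × V₂)))
          = {x | ∃ p : ↥(Submodule.map proj02 (Λ ⊓ Kdiag)),
                x = ((p.val.1, ℓ p), (ℓ p, p.val.2))}) ∧
    ∀ p ∈ Submodule.map proj02 (Λ ⊓ Kdiag),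
      ∃! v₁ : V₁, ((p.1, v₁), (v₁, p.2)) ∈ Λ := by
  have expand : ∀ x y : (V₀ × V₁) × (V₁ × V₂),
      form0112 ω₀ ω₁ ω₂ x y
        = - ω₀ x.1.1 y.1.1 + ω₁ x.1.2 y.1.2 - ω₁ x.2.1 y.2.1 + ω₂ x.2.2 y.2.2 :=
    fun _ _ => rfl
  -- key: diagonal vectors with zero outer components in Λ are zero
  have key : ∀ v : V₁, (((0 : V₀), v), (v, (0 : V₂))) ∈ Λ → v = 0 := by
    intro v hv
    apply hω₁.nondeg
    intro w
    have hy : (((0 : V₀), w), ((0 : V₁), (0 : V₂))) ∈ Λ ⊔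
        (Kdiag : Submodule ℝ ((V₀ × V₁) × (V₁ × V₂))) := by
      rw [htrans]; trivial
    obtain ⟨a, ha, b, hb, hab⟩ := Submodule.mem_sup.mp hy
    have hb' : b.1.2 = b.2.1 := hb
    have hxa : form0112 ω₀ ω₁ ω₂ (((0 : V₀), v), (v, (0 : V₂))) a = 0 := by
      rw [hΛ] at hv; exact hv a ha
    have hsum : form0112 ω₀ ω₁ ω₂ (((0 : V₀), v), (v, (0 : V₂))) (a + b)
        = form0112 ω₀ ω₁ ω₂ (((0 : V₀), v), (v, (0 : V₂))) a
          + form0112 ω₀ ω₁ ω₂ (((0 : V₀), v), (v, (0 : V₂))) b := map_add _ _ _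
    rw [hab, hxa, zero_add, expand, expand] at hsum
    simp only [map_zero, LinearMap.zero_apply, hb'] at hsum
    linarith [hsum]
  have inj0 : ∀ x ∈ Λ ⊓ Kdiag, proj02 x = 0 → x = 0 := by
    intro x hx hpx
    obtain ⟨hxΛ, hxK⟩ := hx
    have hxK' : x.1.2 = x.2.1 := hxK
    have h1 : x.1.1 = 0 := congrArg Prod.fst hpx
    have h2 : x.2.2 = 0 := congrArg Prod.snd hpx
    have hxeq : x = (((0 : V₀), x.1.2), (x.1.2, (0 : V₂))) := by
      ext <;> simp [h1, h2, hxK']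
    have := key x.1.2 (by rwa [hxeq] at hxΛ)
    rw [hxeq, this]; rfl
  set M := Submodule.map (proj02 (V₀ := V₀) (V₁ := V₁) (V₂ := V₂)) (Λ ⊓ Kdiag) with hM
  have gmem : ∀ x : ↥(Λ ⊓ Kdiag), (proj02 ∘ₗ (Λ ⊓ Kdiag).subtype) x ∈ M :=
    fun x => Submodule.mem_map_of_mem x.2
  set g : ↥(Λ ⊓ Kdiag) →ₗ[ℝ] ↥M :=
    LinearMap.codRestrict M (proj02 ∘ₗ (Λ ⊓ Kdiag).subtype) gmem with hg
  have hgval : ∀ x : ↥(Λ ⊓ Kdiag), (g x : V₀ × V₂) = proj02 (x : (V₀ × V₁) × (V₁ × V₂)) :=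
    fun _ => rfl
  have hbij : Function.Bijective g := by
    constructor
    · intro x y hxy
      have : proj02 ((x : (V₀ × V₁) × (V₁ × V₂)) - (y : (V₀ × V₁) × (V₁ × V₂))) = 0 := by
        rw [map_sub, ← hgval, ← hgval, hxy, sub_self]
      have h0 := inj0 _ (Submodule.sub_mem _ x.2 y.2) this
      exact Subtype.ext (by rwa [sub_eq_zero] at h0)
    · rintro ⟨p, x, hx, hpx⟩
      exact ⟨⟨x, hx⟩, Subtype.ext hpx⟩
  set e := LinearEquiv.ofBijective g hbij with he
  set ℓ : ↥M →ₗ[ℝ] V₁ :=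
    ((LinearMap.snd ℝ V₀ V₁) ∘ₗ (LinearMap.fst ℝ (V₀ × V₁) (V₁ × V₂))
      ∘ₗ (Λ ⊓ Kdiag).subtype) ∘ₗ e.symm.toLinearMap with hℓ
  have hℓval : ∀ p : ↥M, ℓ p = ((e.symm p : ↥(Λ ⊓ Kdiag)) : (V₀ × V₁) × (V₁ × V₂)).1.2 :=
    fun _ => rfl
  have hrep : ∀ p : ↥M,
      ((e.symm p : ↥(Λ ⊓ Kdiag)) : (V₀ × V₁) × (V₁ × V₂))
        = ((p.val.1, ℓ p), (ℓ p, p.val.2)) := by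
    intro p
    set x := e.symm p with hx
    have hgx : g x = p := e.apply_symm_apply p
    have hpx : proj02 ((x : ↥(Λ ⊓ Kdiag)) : (V₀ × V₁) × (V₁ × V₂)) = (p : V₀ × V₂) := by
      rw [← hgval, hgx]
    have h1 : ((x : ↥(Λ ⊓ Kdiag)) : (V₀ × V₁) × (V₁ × V₂)).1.1 = p.val.1 :=
      congrArg Prod.fst hpx
    have h2 : ((x : ↥(Λ ⊓ Kdiag)) : (V₀ × V₁) × (V₁ × V₂)).2.2 = p.val.2 :=
      congrArg Prod.snd hpx
    have hK : ((x : ↥(Λ ⊓ Kdiag)) : (V₀ × V₁) × (V₁ × V₂)).1.2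
        = ((x : ↥(Λ ⊓ Kdiag)) : (V₀ × V₁) × (V₁ × V₂)).2.1 := x.2.2
    have hl : ℓ p = ((x : ↥(Λ ⊓ Kdiag)) : (V₀ × V₁) × (V₁ × V₂)).1.2 := rfl
    ext <;> simp [h1, h2, hl, hK]
  have hmem : ∀ p : ↥M, ((p.val.1, ℓ p), (ℓ p, p.val.2)) ∈ Λ ⊓ Kdiag := by
    intro p
    have := (e.symm p).2
    rwa [hrep p] at this
  have hset : (↑(Λ ⊓ Kdiag) : Set ((V₀ × V₁) × (V₁ × V₂)))
      = {x | ∃ p : ↥M, x = ((p.val.1, ℓ p), (ℓ p, p.val.2))} := by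
    ext x
    constructor
    · intro hx
      refine ⟨g ⟨x, hx⟩, ?_⟩
      have h0 : e.symm (g ⟨x, hx⟩) = ⟨x, hx⟩ := e.symm_apply_apply _
      have h2 := hrep (g ⟨x, hx⟩)
      rw [h0] at h2
      simpa using h2
    · rintro ⟨p, rfl⟩
      exact hmem p
  have diffzero : ∀ (p : ↥M) (u v : V₁),
      ((p.val.1, u), (u, p.val.2)) ∈ Λ → ((p.val.1, v), (v, p.val.2)) ∈ Λ → u = v := by
    intro p u v hu hv
    have hmemu : ((p.val.1, u), (u, p.val.2)) ∈ Λ ⊓ Kdiag := ⟨hu, rfl⟩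
    have hmemv : ((p.val.1, v), (v, p.val.2)) ∈ Λ ⊓ Kdiag := ⟨hv, rfl⟩
    have hd : (((p.val.1, u), (u, p.val.2)) : (V₀ × V₁) × (V₁ × V₂))
        - ((p.val.1, v), (v, p.val.2)) = (((0 : V₀), u - v), (u - v, (0 : V₂))) := by
      ext <;> simp
    have hmemd := Submodule.sub_mem _ hmemu hmemv
    rw [hd] at hmemd
    exact sub_eq_zero.mp (key (u - v) hmemd.1)
  refine ⟨⟨ℓ, hset, ?_⟩, ?_⟩
  · intro ℓ' hℓ'
    apply LinearMap.ext
    intro p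
    have h1 : ((p.val.1, ℓ' p), (ℓ' p, p.val.2)) ∈ Λ ⊓ Kdiag := by
      rw [← SetLike.mem_coe, hℓ']; exact ⟨p, rfl⟩
    exact diffzero p (ℓ' p) (ℓ p) h1.1 (hmem p).1
  · intro p hp
    refine ⟨ℓ ⟨p, hp⟩, (hmem ⟨p, hp⟩).1, fun v hv => diffzero ⟨p, hp⟩ v (ℓ ⟨p, hp⟩) hv (hmem ⟨p, hp⟩).1⟩
end
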